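/- For γ > 0, 0 < α < 1 and j a nonnegative integer, the quantity F_j := ₂F₁(γ, jγ; 1+jγ; α) has the integral representation F_j = (1−α)^(−γ) − αγ ∫₀¹ u^(jγ) (1−αu)^(−γ−1) du. -/

import Mathlib

open MeasureTheory Real

/-- The Pochhammer symbol `(a)_k = a (a+1) ⋯ (a+k-1)` for a real number `a`. -/
def pochR (a : ℝ) (k : ℕ) : ℝ := ∏ i ∈ Finset.range k, (a + (i : ℝ))


lemma pochR_zero (a : ℝ) : pochR a 0 = 1 := by simp [pochR]

lemma pochR_succ (a : ℝ) (k : ℕ) : pochR a (k + 1) = pochR a k * (a + k) :=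
  Finset.prod_range_succ _ _

lemma pochR_succ' (a : ℝ) (k : ℕ) : pochR a (k + 1) = a * pochR (a + 1) k := by
  rw [pochR, Finset.prod_range_succ']
  simp only [Nat.cast_zero, add_zero, mul_comm]
  congr 1
  apply Finset.prod_congr rfl
  intro i _
  push_cast
  ring

lemma pochR_pos {a : ℝ} (ha : 0 < a) (k : ℕ) : 0 < pochR a k :=
  Finset.prod_pos fun i _ => by positivity

lemma pochR_nonneg {a : ℝ} (ha : 0 ≤ a) (k : ℕ) : 0 ≤ pochR a k :=
  Finset.prod_nonneg fun i _ => by positivity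

lemma pochR_le_pochR {a b : ℝ} (ha : 0 ≤ a) (hab : a ≤ b) (k : ℕ) :
    pochR a k ≤ pochR b k :=
  Finset.prod_le_prod (fun i _ => by positivity) (fun i _ => by linarith)

/-- ratio-test summability of the binomial series terms -/
lemma summable_poch {a : ℝ} (ha : 0 ≤ a) {r : ℝ} (hr0 : 0 < r) (hr1 : r < 1) :
    Summable (fun k : ℕ => pochR a k / (k.factorial : ℝ) * r ^ k) := by
  set r' : ℝ := (1 + r) / 2 with hr'
  have hr'1 : r' < 1 := by rw [hr']; linarith
  apply summable_of_ratio_norm_eventually_le hr'1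
  have hk0 : ∀ᶠ k : ℕ in Filter.atTop, a * r ≤ (r' - r) * k := by
    apply Filter.Tendsto.eventually_ge_atTop
    exact (tendsto_natCast_atTop_atTop).const_mul_atTop (by linarith : (0:ℝ) < r' - r)
  filter_upwards [hk0] with k hk
  have hfac : (0:ℝ) < (k.factorial : ℝ) := by positivity
  have hp := pochR_nonneg ha k
  rw [pochR_succ, Nat.factorial_succ]
  push_cast
  rw [Real.norm_eq_abs, Real.norm_eq_abs, abs_of_nonneg (by positivity),
    abs_of_nonneg (by positivity)]
  rw [pow_succ]
  rw [div_mul_eq_mul_div, div_mul_eq_mul_div, div_le_iff₀ (by positivity)]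
  have key : (a + k) * r ≤ r' * (k + 1) := by nlinarith
  calc pochR a k * (a + k) * (r ^ k * r)
      = pochR a k * r ^ k * ((a + k) * r) := by ring
    _ ≤ pochR a k * r ^ k * (r' * (k + 1)) := by
        apply mul_le_mul_of_nonneg_left key (by positivity)
    _ = (1 + r) * (pochR a k / ↑k.factorial * r ^ k) / 2 *
          ((↑k + 1) * ↑k.factorial) := by
        field_simp [hr']; ring

lemma summable_poch_deriv {a : ℝ} (ha : 0 ≤ a) {r : ℝ} (hr0 : 0 < r) (hr1 : r < 1) :
    Summable (fun k : ℕ => pochR a k / (k.factorial : ℝ) * ((k : ℝ) * r ^ (k - 1))) := by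
  rw [← summable_nat_add_iff 1]
  apply Summable.congr (((summable_poch (by linarith : (0:ℝ) ≤ a + 1) hr0 hr1).mul_left a))
  intro k
  rw [pochR_succ', Nat.factorial_succ]
  push_cast
  field_simp

set_option maxHeartbeats 1000000 in
/-- The binomial series `(1-x)^(-a) = ∑ (a)_k / k! x^k` for `0 ≤ x < 1`, `a > 0`. -/
lemma binomial_hasSum {a : ℝ} (ha : 0 < a) {x : ℝ} (hx0 : 0 ≤ x) (hx1 : x < 1) :
    HasSum (fun k : ℕ => pochR a k / (k.factorial : ℝ) * x ^ k) ((1 - x) ^ (-a)) := by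
  set c : ℝ := (1 + x) / 2 with hc
  have hc0 : 0 < c := by rw [hc]; linarith
  have hc1 : c < 1 := by rw [hc]; linarith
  have hxc : x < c := by rw [hc]; linarith
  set g : ℕ → ℝ → ℝ := fun k y => pochR a k / (k.factorial : ℝ) * y ^ k with hg
  set g' : ℕ → ℝ → ℝ := fun k y => pochR a k / (k.factorial : ℝ) * ((k : ℝ) * y ^ (k - 1))
    with hg'
  set u : ℕ → ℝ := fun k => pochR a k / (k.factorial : ℝ) * ((k : ℝ) * c ^ (k - 1)) with hu
  have hu_sum : Summable u := summable_poch_deriv ha.le hc0 hc1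
  have hderiv : ∀ k (y : ℝ), HasDerivAt (g k) (g' k y) y := fun k y =>
    (hasDerivAt_pow k y).const_mul _
  have hbound : ∀ k (y : ℝ), y ∈ Set.Ioo (-c) c → ‖g' k y‖ ≤ u k := by
    intro k y hy
    have h1 : |y| ≤ c := by
      rw [abs_le]; exact ⟨hy.1.le, hy.2.le⟩
    have hpk := pochR_nonneg ha.le k
    have hq : (0:ℝ) ≤ pochR a k / k.factorial := by positivity
    rw [hg', hu, Real.norm_eq_abs, abs_mul, abs_mul, abs_pow,
      abs_of_nonneg hq, abs_of_nonneg (by positivity : (0:ℝ) ≤ (k:ℝ))]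
    have h2 : |y| ^ (k - 1) ≤ c ^ (k - 1) := pow_le_pow_left₀ (abs_nonneg y) h1 _
    apply mul_le_mul_of_nonneg_left _ hq
    exact mul_le_mul_of_nonneg_left h2 (by positivity)
  have hg0 : Summable (fun k => g k 0) := by
    apply summable_of_ne_finset_zero (s := {0})
    intro k hk
    have : k ≠ 0 := by simpa using hk
    simp [hg, zero_pow this]
  -- the sum function and its derivative on Ioo (-c) c
  have h0mem : (0:ℝ) ∈ Set.Ioo (-c) c := Set.mem_Ioo.mpr ⟨by linarith, hc0⟩
  have hS : ∀ y ∈ Set.Ioo (-c) c,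
      HasDerivAt (fun z => ∑' k, g k z) (∑' k, g' k y) y := by
    intro y hy
    exact hasDerivAt_tsum_of_isPreconnected hu_sum isOpen_Ioo
      (convex_Ioo _ _).isPreconnected (fun k y _ => hderiv k y) hbound
      h0mem hg0 hy
  have hSsum : ∀ y ∈ Set.Ioo (-c) c, Summable (fun k => g k y) := by
    intro y hy
    exact summable_of_summable_hasDerivAt_of_isPreconnected hu_sum isOpen_Ioo
      (convex_Ioo _ _).isPreconnected (fun k y _ => hderiv k y) hbound
      h0mem hg0 hy
  have hxc : x < c := hxc
  -- the key ODE identity (1-y) S'(y) = a S(y) for 0 ≤ y < c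
  have key : ∀ y, 0 ≤ y → y < c → (1 - y) * (∑' k, g' k y) = a * ∑' k, g k y := by
    intro y hy0 hyc
    have hyc' : y ∈ Set.Ioo (-c) c := ⟨by linarith, hyc⟩
    have ht : Summable (fun k => g' k y) := by
      apply hu_sum.of_nonneg_of_le
      · intro k
        rw [hg']
        have := pochR_nonneg ha.le k
        positivity
      · intro k
        rw [hg', hu]
        have hq : (0:ℝ) ≤ pochR a k / k.factorial := by
          have := pochR_nonneg ha.le k
          positivity
        apply mul_le_mul_of_nonneg_left _ hq
        apply mul_le_mul_of_nonneg_left _ (by positivity : (0:ℝ) ≤ (k:ℝ))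
        exact pow_le_pow_left₀ hy0 hyc.le _
    have hsum_s : Summable (fun k => g k y) := hSsum y hyc'
    have hterm : ∀ k : ℕ, g' (k + 1) y = pochR a (k + 1) / (k.factorial : ℝ) * y ^ k := by
      intro k
      rw [hg']
      simp only [Nat.add_sub_cancel, Nat.factorial_succ]
      push_cast
      have : (k.factorial : ℝ) ≠ 0 := by positivity
      field_simp
    have hsum_d : Summable (fun k => pochR a (k + 1) / (k.factorial : ℝ) * y ^ k) :=
      ((summable_nat_add_iff 1).mpr ht).congr hterm
    have E1 : ∑' k, g' k y = ∑' k : ℕ, pochR a (k + 1) / (k.factorial : ℝ) * y ^ k := by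
      rw [Summable.tsum_eq_zero_add ht]
      have : g' 0 y = 0 := by rw [hg']; simp
      rw [this, zero_add]
      exact tsum_congr hterm
    have E2 : (∑' k : ℕ, pochR a (k + 1) / (k.factorial : ℝ) * y ^ k) - a * ∑' k, g k y
        = y * ∑' k, g' k y := by
      rw [← tsum_mul_left (a := a), ← tsum_mul_left (a := y),
        ← Summable.tsum_sub hsum_d (hsum_s.mul_left a)]
      apply tsum_congr
      intro k
      rw [hg, hg', pochR_succ]
      cases k with
      | zero => simp; ring
      | succ m =>
        simp only [Nat.add_sub_cancel, Nat.factorial_succ, pow_succ]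
        push_cast
        have : (m.factorial : ℝ) ≠ 0 := by positivity
        field_simp
        ring
    rw [sub_mul, one_mul]
    linear_combination E1 + E2
  -- the auxiliary function h(y) = S(y) (1-y)^a has zero derivative on [0, c)
  set S : ℝ → ℝ := fun y => ∑' k, g k y with hSdef
  set h : ℝ → ℝ := fun y => S y * (1 - y) ^ a with hhdef
  have hh : ∀ y, 0 ≤ y → y < c → HasDerivAt h 0 y := by
    intro y hy0 hyc
    have h1y : 0 < 1 - y := by linarith
    have hd1 : HasDerivAt S (∑' k, g' k y) y := hS y ⟨by linarith, hyc⟩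
    have hd2 : HasDerivAt (fun z : ℝ => (1 - z) ^ a) (-(a * (1 - y) ^ (a - 1))) y := by
      have h1 := Real.hasDerivAt_rpow_const (x := 1 - y) (p := a) (Or.inl (ne_of_gt h1y))
      have hlin : HasDerivAt (fun z : ℝ => 1 - z) (-1) y := (hasDerivAt_id y).const_sub 1
      have := h1.comp y hlin
      simpa [Function.comp_def] using this
    have hd := hd1.mul hd2
    have hpow : (1 - y) ^ a = (1 - y) ^ (a - 1) * (1 - y) := by
      rw [← Real.rpow_add_one (ne_of_gt h1y) (a - 1)]
      norm_num
    have hkey := key y hy0 hyc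
    have hSy : S y = ∑' (k : ℕ), g k y := rfl
    have hzero : (∑' k, g' k y) * (1 - y) ^ a + S y * -(a * (1 - y) ^ (a - 1)) = 0 := by
      rw [hpow, hSy]
      linear_combination ((1 - y) ^ (a - 1)) * hkey
    rw [← hzero]
    exact hd
  -- conclude h is constant on [0, x]
  have hcont : ContinuousOn h (Set.Icc 0 x) := fun y hy =>
    ((hh y hy.1 (lt_of_le_of_lt hy.2 hxc)).continuousAt).continuousWithinAt
  have hconst := constant_of_has_deriv_right_zero hcont (fun y hy =>
    ((hh y hy.1 (lt_of_lt_of_le hy.2 (le_of_lt hxc))).hasDerivWithinAt))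
  have hx0' : h x = h 0 := hconst x (Set.right_mem_Icc.mpr hx0)
  have hS0 : S 0 = 1 := by
    have h1 : ∀ k : ℕ, k ≠ 0 → g k 0 = 0 := by
      intro k hk; rw [hg]; simp [zero_pow hk]
    have h2 : g 0 0 = 1 := by rw [hg]; simp [pochR_zero]
    show (∑' k, g k 0) = 1
    rw [tsum_eq_single 0 h1, h2]
  have h0 : h 0 = 1 := by
    show S 0 * (1 - (0:ℝ)) ^ a = 1
    rw [hS0]; simp
  have hx1' : 0 < 1 - x := by linarith
  have hfin : S x * (1 - x) ^ a = 1 := hx0'.trans h0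
  have hSx : S x = (1 - x) ^ (-a) := by
    rw [Real.rpow_neg hx1'.le]
    exact eq_inv_of_mul_eq_one_left hfin
  have hsx : Summable (fun k : ℕ => pochR a k / (k.factorial : ℝ) * x ^ k) :=
    hSsum x ⟨by linarith, hxc⟩
  exact (Summable.hasSum_iff hsx).mpr hSx

set_option maxHeartbeats 1000000 in
theorem F_integral_representation (γ α : ℝ) (hγ : 0 < γ) (hα : 0 < α) (hα1 : α < 1)
    (j : ℕ) :
    (∑' k : ℕ,
        pochR γ k * pochR (j * γ) k / ((k.factorial : ℝ) * pochR (1 + j * γ) k) * α ^ k) =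
      (1 - α) ^ (-γ) - α * γ * ∫ u in Set.Ioo (0 : ℝ) 1, u ^ (j * γ) * (1 - α * u) ^ (-γ - 1) := by
  set jg : ℝ := (j : ℝ) * γ with hjgdef
  have hjg : 0 ≤ jg := by positivity
  -- series terms
  set l : ℕ → ℝ := fun k => pochR γ k * pochR jg k / ((k.factorial : ℝ) * pochR (1 + jg) k) * α ^ k
    with hl
  set A : ℕ → ℝ := fun k => pochR γ k / (k.factorial : ℝ) * α ^ k with hA
  set B : ℕ → ℝ := fun k => α * γ * (pochR (γ + 1) k / (k.factorial : ℝ) * α ^ k *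
    (1 / (jg + k + 1))) with hB
  have binomα : HasSum A ((1 - α) ^ (-γ)) := binomial_hasSum hγ hα.le hα1
  -- the integrand series
  set G : ℝ → ℝ := fun u => u ^ jg * (1 - α * u) ^ (-γ - 1) with hG
  set F : ℕ → ℝ → ℝ := fun k u => pochR (γ + 1) k / (k.factorial : ℝ) * α ^ k * u ^ (jg + k)
    with hF
  have hγ1 : (0:ℝ) < γ + 1 := by linarith
  have hFnonneg : ∀ k : ℕ, ∀ u : ℝ, 0 ≤ u → 0 ≤ F k u := by
    intro k u hu
    rw [hF]
    have := pochR_nonneg hγ1.le k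
    have := Real.rpow_nonneg hu (jg + k)
    positivity
  have hpt : ∀ u : ℝ, u ∈ Set.Ioo (0:ℝ) 1 → HasSum (fun k => F k u) (G u) := by
    intro u hu
    have hu0 : 0 < u := hu.1
    have hu1 : u < 1 := hu.2
    have hαu0 : 0 ≤ α * u := by positivity
    have hαu1 : α * u < 1 := by nlinarith
    have hs := (binomial_hasSum hγ1 hαu0 hαu1).mul_left (u ^ jg)
    have hexp : -γ - 1 = -(γ + 1) := by ring
    rw [hG]
    rw [hexp]
    convert hs using 2 with k
    case e'_3 => rfl
    simp only [hF, mul_pow]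
    rw [Real.rpow_add hu0, Real.rpow_natCast]
    ring
  -- measurability and integrability
  have hcontrpow : ∀ p : ℝ, 0 ≤ p → Continuous (fun u : ℝ => u ^ p) := by
    intro p hp
    apply continuous_iff_continuousAt.mpr
    intro x
    exact Real.continuousAt_rpow_const x p (Or.inr hp)
  have hFmeas : ∀ k : ℕ, AEStronglyMeasurable (F k)
      (volume.restrict (Set.Ioo (0:ℝ) 1)) := by
    intro k
    apply Continuous.aestronglyMeasurable
    rw [hF]
    exact continuous_const.mul (hcontrpow _ (by positivity))
  have hGint : IntegrableOn G (Set.Ioo (0:ℝ) 1) := by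
    apply (IntegrableOn.mono_set _ Set.Ioo_subset_Icc_self)
    apply ContinuousOn.integrableOn_Icc
    apply ContinuousOn.mul
    · exact (hcontrpow jg hjg).continuousOn
    · apply ContinuousOn.rpow_const
      · exact (continuous_const.sub (continuous_const.mul continuous_id)).continuousOn
      · intro x hx
        left
        have := hx.1
        have := hx.2
        nlinarith
  have hB0 : ∀ k : ℕ, ∀ᵐ u ∂(volume.restrict (Set.Ioo (0:ℝ) 1)), ‖F k u‖ ≤ F k u := by
    intro k
    rw [ae_restrict_iff' measurableSet_Ioo]
    apply Filter.Eventually.of_forall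
    intro u hu
    rw [Real.norm_eq_abs, abs_of_nonneg (hFnonneg k u hu.1.le)]
  have hbsum : ∀ᵐ u ∂(volume.restrict (Set.Ioo (0:ℝ) 1)), Summable fun k => F k u := by
    rw [ae_restrict_iff' measurableSet_Ioo]
    exact Filter.Eventually.of_forall fun u hu => (hpt u hu).summable
  have hbint : Integrable (fun u => ∑' k, F k u) (volume.restrict (Set.Ioo (0:ℝ) 1)) := by
    apply hGint.congr
    rw [Filter.EventuallyEq, ae_restrict_iff' measurableSet_Ioo]
    exact Filter.Eventually.of_forall fun u hu => ((hpt u hu).tsum_eq).symm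
  have hlim : ∀ᵐ u ∂(volume.restrict (Set.Ioo (0:ℝ) 1)), HasSum (fun k => F k u) (G u) := by
    rw [ae_restrict_iff' measurableSet_Ioo]
    exact Filter.Eventually.of_forall hpt
  have hIsum : HasSum (fun k => ∫ u in Set.Ioo (0:ℝ) 1, F k u)
      (∫ u in Set.Ioo (0:ℝ) 1, G u) :=
    MeasureTheory.hasSum_integral_of_dominated_convergence F hFmeas hB0 hbsum hbint hlim
  -- compute each integral
  have hint : ∀ k : ℕ, (∫ u in Set.Ioo (0:ℝ) 1, F k u)
      = pochR (γ + 1) k / (k.factorial : ℝ) * α ^ k * (1 / (jg + k + 1)) := by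
    intro k
    have hp : (0:ℝ) ≤ jg + k := by positivity
    have hp1 : (0:ℝ) < jg + k + 1 := by linarith
    simp only [hF]
    rw [MeasureTheory.integral_const_mul]
    congr 1
    rw [← MeasureTheory.integral_Ioc_eq_integral_Ioo,
      ← intervalIntegral.integral_of_le (zero_le_one)]
    rw [integral_rpow (Or.inl (by linarith : (-1:ℝ) < jg + k))]
    rw [Real.one_rpow, Real.zero_rpow (by linarith : jg + (k:ℝ) + 1 ≠ 0)]
    ring
  have hBsum : HasSum B (α * γ * ∫ u in Set.Ioo (0:ℝ) 1, G u) := by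
    have h2 := hIsum.mul_left (α * γ)
    have h3 : (fun k => α * γ * ∫ u in Set.Ioo (0:ℝ) 1, F k u) = B := by
      funext k
      rw [hint k, hB]
    rwa [h3] at h2
  -- summability of the hypergeometric series by comparison with A
  have hQpos : ∀ k : ℕ, 0 < pochR (1 + jg) k := fun k => pochR_pos (by linarith) k
  have hlnonneg : ∀ k, 0 ≤ l k := by
    intro k
    simp only [hl]
    have h1 := pochR_nonneg hγ.le k
    have h2 := pochR_nonneg hjg k
    have h3 := (hQpos k).le
    positivity
  have hlleA : ∀ k, l k ≤ A k := by
    intro k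
    simp only [hl, hA]
    apply mul_le_mul_of_nonneg_right _ (by positivity : (0:ℝ) ≤ α ^ k)
    have hfac : (0:ℝ) < k.factorial := by positivity
    rw [div_le_div_iff₀ (mul_pos hfac (hQpos k)) hfac]
    have h1 := pochR_le_pochR hjg (by linarith : jg ≤ 1 + jg) k
    have h2 := pochR_nonneg hγ.le k
    nlinarith [mul_le_mul_of_nonneg_left h1 (mul_nonneg h2 hfac.le)]
  have hlsum : Summable l := Summable.of_nonneg_of_le hlnonneg hlleA binomα.summable
  have hAsum' : Summable (fun k => A (k + 1)) := (summable_nat_add_iff 1).mpr binomα.summable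
  -- the termwise identity
  have hterm : ∀ k : ℕ, l (k + 1) = A (k + 1) - B k := by
    intro k
    simp only [hl, hA, hB]
    have e1 : pochR jg (k + 1) = jg * pochR (1 + jg) k := by
      rw [pochR_succ', add_comm jg 1]
    rw [pochR_succ' γ k, e1, pochR_succ (1 + jg) k, Nat.factorial_succ]
    have hQ := hQpos k
    have hfac : (0:ℝ) < k.factorial := by positivity
    have h1 : (0:ℝ) < 1 + jg + k := by positivity
    have h2 : (0:ℝ) < jg + k + 1 := by positivity
    push_cast
    field_simp
    ring
  -- assemble everything
  rw [← binomα.tsum_eq, ← hBsum.tsum_eq]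
  have hl0 : l 0 = 1 := by simp [hl, pochR_zero]
  have hA0 : A 0 = 1 := by simp [hA, pochR_zero]
  rw [Summable.tsum_eq_zero_add hlsum, Summable.tsum_eq_zero_add binomα.summable, hl0, hA0]
  have : ∑' k, l (k + 1) = ∑' k, A (k + 1) - ∑' k, B k := by
    rw [← Summable.tsum_sub hAsum' hBsum.summable]
    exact tsum_congr hterm
  linarith [this]
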